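/- arXiv:2312.14531 — 2 statements merged into one kernel-verified Lean document; each statement's English description precedes it below -/
import Mathlib

section
/- For every ε > 0 there is a constant C = C(ε) such that for every positive integer r, every real M₀ ≥ 0 and every real M ≥ 0, one has ∑_{M₀ < t ≤ M₀ + M} min{r^(1/6), gcd(r, t)} ≤ C · r^ε · (M + r^(1/6)), where the sum is over integers t. -/
open Finset

/-- `e x = exp(2πix)`. -/
noncomputable def e (x : ℝ) : ℂ := Complex.exp (2 * Real.pi * Complex.I * x)

/-- Quartic Weyl sum `S₄(α, N) = ∑_{1 ≤ n ≤ N} e(α n⁴)`. -/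
noncomputable def S4 (α N : ℝ) : ℂ := ∑ n ∈ Finset.Icc 1 ⌊N⌋₊, e (α * (n : ℝ) ^ 4)

/-- Incomplete cubic sum `Σ(q; u, v; I) = ∑_{n ∈ I ∩ ℤ} e_q(u n³ + v n)`. -/
noncomputable def SigmaI (q : ℕ) (u v : ℤ) (I : Set ℝ) : ℂ :=
  ∑' n : ℤ, Set.indicator I (fun _ => e (((u * n ^ 3 + v * n : ℤ) : ℝ) / q)) (n : ℝ)

/-- Complete cubic sum `Σ(q; u, v) = ∑_{n mod q} e_q(u n³ + v n)`. -/
noncomputable def SigmaC (q : ℕ) (u v : ℤ) : ℂ :=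
  ∑ n ∈ Finset.range q, e (((u * (n : ℤ) ^ 3 + v * (n : ℤ) : ℤ) : ℝ) / q)

/-- A quadratic irrational: an irrational root of a quadratic with integer coefficients. -/
def IsQuadraticIrrational (α : ℝ) : Prop :=
  Irrational α ∧ ∃ a b c : ℤ, a ≠ 0 ∧ (a : ℝ) * α ^ 2 + (b : ℝ) * α + (c : ℝ) = 0

lemma tau_aux (ε : ℝ) (hε : 0 < ε) :
    ∃ C : ℝ, 0 < C ∧ ∀ n : ℕ, 0 < n → ((n.divisors.card : ℝ)) ≤ C * (n : ℝ) ^ ε := by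
  have hlog2 : (0:ℝ) < Real.log 2 := Real.log_pos (by norm_num)
  set K : ℝ := max 1 (2 / (ε * Real.log 2)) with hKdef
  have hK1 : (1:ℝ) ≤ K := le_max_left _ _
  have hK0 : (0:ℝ) ≤ K := by linarith
  set B : ℕ := ⌈(2:ℝ) ^ ((1:ℝ)/ε)⌉₊ with hBdef
  refine ⟨K ^ (B + 1), by positivity, ?_⟩
  intro n hn
  -- pointwise bound for each prime power factor
  have key : ∀ p ∈ n.primeFactors,
      ((n.factorization p + 1 : ℕ) : ℝ) ≤
        (if (p:ℝ) ^ ε < 2 then K else 1) * ((p:ℝ) ^ (n.factorization p)) ^ ε := by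
    intro p hp
    have hpp : p.Prime := Nat.prime_of_mem_primeFactors hp
    have hp2 : (2:ℝ) ≤ (p:ℝ) := by exact_mod_cast hpp.two_le
    have hp0 : (0:ℝ) ≤ (p:ℝ) := by linarith
    set a : ℕ := n.factorization p with hadef
    have ha1 : 1 ≤ a := Nat.Prime.factorization_pos_of_dvd hpp hn.ne' (Nat.dvd_of_mem_primeFactors hp)
    have hrw : ((p:ℝ) ^ a) ^ ε = ((p:ℝ) ^ ε) ^ a := by
      rw [← Real.rpow_natCast (p:ℝ) a, ← Real.rpow_mul hp0, mul_comm,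
        Real.rpow_mul hp0, Real.rpow_natCast]
    rw [hrw]
    by_cases hc : (p:ℝ) ^ ε < 2
    · rw [if_pos hc]
      have hx : (2:ℝ) ^ ε ≤ (p:ℝ) ^ ε := Real.rpow_le_rpow (by norm_num) hp2 hε.le
      have hx2 : Real.exp (ε * a * Real.log 2) ≤ ((p:ℝ) ^ ε) ^ a := by
        have : ((2:ℝ) ^ ε) ^ a ≤ ((p:ℝ) ^ ε) ^ a :=
          pow_le_pow_left₀ (Real.rpow_nonneg (by norm_num) _) hx a
        refine le_trans (le_of_eq ?_) this
        rw [← Real.rpow_natCast ((2:ℝ) ^ ε) a, ← Real.rpow_mul (by norm_num),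
          Real.rpow_def_of_pos (by norm_num)]
        ring_nf
      have hexp : ε * a * Real.log 2 ≤ Real.exp (ε * a * Real.log 2) := by
        have := Real.add_one_le_exp (ε * a * Real.log 2)
        nlinarith [Real.exp_pos (ε * a * Real.log 2)]
      have hKge : 2 / (ε * Real.log 2) ≤ K := le_max_right _ _
      have hεa : (0:ℝ) ≤ ε * a * Real.log 2 := by positivity
      have h2a : 2 / (ε * Real.log 2) * (ε * a * Real.log 2) = 2 * a := by
        field_simp
      have : 2 / (ε * Real.log 2) * (ε * a * Real.log 2) ≤ K * ((p:ℝ) ^ ε) ^ a := by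
        apply mul_le_mul hKge (le_trans hexp hx2) hεa hK0
      rw [h2a] at this
      have ha1' : (1:ℝ) ≤ (a:ℝ) := by exact_mod_cast ha1
      push_cast
      linarith
    · rw [if_neg hc, one_mul]
      push_neg at hc
      have h2a : ((a:ℝ) + 1) ≤ (2:ℝ) ^ a := by
        have := @Nat.lt_two_pow_self a
        exact_mod_cast Nat.succ_le_of_lt this
      refine le_trans (by push_cast; linarith) (le_trans h2a ?_)
      exact pow_le_pow_left₀ (by norm_num) hc a
  -- assemble
  have hcard : ((n.divisors.card : ℕ) : ℝ) =
      ∏ p ∈ n.primeFactors, ((n.factorization p + 1 : ℕ) : ℝ) := by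
    rw [Nat.card_divisors hn.ne']
    push_cast
    rfl
  have hnval : ∏ p ∈ n.primeFactors, ((p:ℝ) ^ (n.factorization p)) = (n:ℝ) := by
    norm_cast
    rw [← Nat.support_factorization]
    exact Nat.factorization_prod_pow_eq_self hn.ne'
  have hprod : ∏ p ∈ n.primeFactors, ((p:ℝ) ^ (n.factorization p)) ^ ε = (n:ℝ) ^ ε := by
    rw [← hnval]
    exact Real.finset_prod_rpow _ _ (fun p _ => by positivity) ε
  have hfilter : (n.primeFactors.filter (fun p : ℕ => (p:ℝ) ^ ε < 2)).card ≤ B + 1 := by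
    have hsub : (n.primeFactors.filter (fun p : ℕ => (p:ℝ) ^ ε < 2)) ⊆ Finset.range (B + 1) := by
      intro p hp
      rw [Finset.mem_filter] at hp
      rw [Finset.mem_range, Nat.lt_succ_iff]
      have hple : (p:ℝ) ≤ (2:ℝ) ^ ((1:ℝ)/ε) := by
        by_contra h
        push_neg at h
        have h2 : ((2:ℝ) ^ ((1:ℝ)/ε)) ^ ε < (p:ℝ) ^ ε :=
          Real.rpow_lt_rpow (by positivity) h hε
        rw [← Real.rpow_mul (by norm_num), one_div, inv_mul_cancel₀ hε.ne',
          Real.rpow_one] at h2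
        linarith [hp.2]
      have : (p:ℝ) ≤ (B:ℝ) := le_trans hple (Nat.le_ceil _)
      exact_mod_cast this
    calc _ ≤ (Finset.range (B+1)).card := Finset.card_le_card hsub
      _ = B + 1 := Finset.card_range _
  have hite : ∏ p ∈ n.primeFactors, (if (p:ℝ) ^ ε < 2 then K else 1 : ℝ) ≤ K ^ (B + 1) := by
    rw [Finset.prod_ite, Finset.prod_const, Finset.prod_const, one_pow, mul_one]
    exact pow_le_pow_right₀ hK1 hfilter
  calc ((n.divisors.card : ℕ) : ℝ)
      = ∏ p ∈ n.primeFactors, ((n.factorization p + 1 : ℕ) : ℝ) := hcard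
    _ ≤ ∏ p ∈ n.primeFactors,
          ((if (p:ℝ) ^ ε < 2 then K else 1) * ((p:ℝ) ^ (n.factorization p)) ^ ε) :=
        Finset.prod_le_prod (fun p _ => by positivity) key
    _ = (∏ p ∈ n.primeFactors, (if (p:ℝ) ^ ε < 2 then K else 1 : ℝ)) *
          ∏ p ∈ n.primeFactors, ((p:ℝ) ^ (n.factorization p)) ^ ε := Finset.prod_mul_distrib
    _ ≤ K ^ (B + 1) * (n:ℝ) ^ ε := by
        rw [hprod]
        exact mul_le_mul_of_nonneg_right hite (Real.rpow_nonneg (Nat.cast_nonneg n) ε)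

theorem gcd_min_sum_bound (ε : ℝ) (hε : 0 < ε) :
    ∃ C : ℝ, ∀ r : ℕ, 0 < r → ∀ M₀ M : ℝ, 0 ≤ M₀ → 0 ≤ M →
      ∑ t ∈ Finset.Ioc ⌊M₀⌋ ⌊M₀ + M⌋,
          min ((r : ℝ) ^ ((1 : ℝ) / 6)) ((Int.gcd (r : ℤ) t : ℝ)) ≤
        C * (r : ℝ) ^ ε * (M + (r : ℝ) ^ ((1 : ℝ) / 6)) := by

  obtain ⟨C₀, hC₀pos, hC₀⟩ := tau_aux ε hε
  refine ⟨2 * C₀, ?_⟩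
  intro r hr M₀ M hM₀ hM
  set A : ℝ := (r : ℝ) ^ ((1 : ℝ) / 6) with hAdef
  have hA : 0 ≤ A := Real.rpow_nonneg (Nat.cast_nonneg r) _
  set a : ℤ := ⌊M₀⌋ with hadef
  set b : ℤ := ⌊M₀ + M⌋ with hbdef
  have hba : (b : ℝ) - a ≤ M + 1 := by
    have h1 : (b : ℝ) ≤ M₀ + M := Int.floor_le _
    have h2 : M₀ - 1 < (a : ℝ) := Int.sub_one_lt_floor _
    linarith
  -- Step 1: pointwise bound by sum over divisors
  have step1 : ∀ t ∈ Finset.Ioc a b,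
      min A ((Int.gcd (r : ℤ) t : ℝ)) ≤
        ∑ d ∈ r.divisors, if (d : ℤ) ∣ t then min A (d : ℝ) else 0 := by
    intro t _
    set g : ℕ := Int.gcd (r : ℤ) t with hgdef
    have hg_mem : g ∈ r.divisors := by
      rw [Nat.mem_divisors]
      refine ⟨?_, hr.ne'⟩
      have : (g : ℤ) ∣ (r : ℤ) := Int.gcd_dvd_left _ _
      exact_mod_cast this
    have hg_dvd : (g : ℤ) ∣ t := Int.gcd_dvd_right _ _
    have := Finset.single_le_sum
      (f := fun d : ℕ => if (d : ℤ) ∣ t then min A (d : ℝ) else 0)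
      (fun d _ => by positivity) hg_mem
    simpa only [if_pos hg_dvd] using this
  -- Step 2: per-divisor count bound
  have step2 : ∀ d ∈ r.divisors,
      min A (d : ℝ) * ((Finset.Ioc a b).filter (fun t => (d : ℤ) ∣ t)).card ≤ M + 2 * A := by
    intro d hd
    have hd1 : 1 ≤ d := Nat.pos_of_mem_divisors hd
    have hd0 : (0 : ℤ) < (d : ℤ) := by exact_mod_cast hd1
    have hd0' : (1 : ℝ) ≤ (d : ℝ) := by exact_mod_cast hd1
    have hcount : (((Finset.Ioc a b).filter (fun t => (d : ℤ) ∣ t)).card : ℝ) ≤ M / d + 2 := by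
      have hcc := Int.Ioc_filter_dvd_card a b hd0
      set u : ℤ := ⌊(b : ℚ) / ((d : ℤ) : ℚ)⌋ with hu
      set v : ℤ := ⌊(a : ℚ) / ((d : ℤ) : ℚ)⌋ with hv
      have h1 : (u : ℝ) ≤ (b : ℝ) / (d : ℝ) := by
        have h := Int.floor_le ((b : ℚ) / ((d : ℤ) : ℚ))
        rw [← hu] at h
        exact_mod_cast h
      have h2 : (a : ℝ) / (d : ℝ) - 1 ≤ (v : ℝ) := by
        have h := (Int.sub_one_lt_floor ((a : ℚ) / ((d : ℤ) : ℚ))).le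
        rw [← hv] at h
        exact_mod_cast h
      have hcard : (((Finset.Ioc a b).filter (fun t => (d : ℤ) ∣ t)).card : ℝ)
          = max ((u : ℝ) - (v : ℝ)) 0 := by
        have : (((Finset.Ioc a b).filter (fun t => (d : ℤ) ∣ t)).card : ℝ)
            = ((max (u - v) 0 : ℤ) : ℝ) := by exact_mod_cast hcc
        rw [this]
        push_cast [Int.cast_max]
        rfl
      rw [hcard]
      refine max_le ?_ (by positivity)
      have hdpos : (0:ℝ) < (d : ℝ) := by linarith
      have hdiff : ((b : ℝ) - (a : ℝ)) / d ≤ (M + 1) / d := by gcongr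
      have h1d : (1:ℝ)/d ≤ 1 := by
        rw [div_le_one hdpos]; exact hd0'
      have heq : (M + 1)/(d:ℝ) = M/d + 1/d := by rw [add_div]
      have hsub : ((b : ℝ) - (a : ℝ)) / d = (b:ℝ)/d - (a:ℝ)/d := by rw [sub_div]
      linarith
    have hmin0 : 0 ≤ min A (d : ℝ) := le_min hA (by linarith)
    calc min A (d : ℝ) * ((Finset.Ioc a b).filter (fun t => (d : ℤ) ∣ t)).card
        ≤ min A (d : ℝ) * (M / d + 2) := by
          apply mul_le_mul_of_nonneg_left hcount hmin0
      _ = min A (d : ℝ) * (M / d) + 2 * min A (d : ℝ) := by ring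
      _ ≤ (d : ℝ) * (M / d) + 2 * A := by
          have hMd : (0:ℝ) ≤ M / d := by positivity
          have hx := mul_le_mul_of_nonneg_right (min_le_right A (d:ℝ)) hMd
          have hy := min_le_left A (d:ℝ)
          linarith
      _ = M + 2 * A := by
          rw [mul_div_cancel₀]
          positivity
  -- assemble
  have hτ : ((r.divisors.card : ℕ) : ℝ) ≤ C₀ * (r : ℝ) ^ ε := hC₀ r hr
  calc ∑ t ∈ Finset.Ioc a b, min A ((Int.gcd (r : ℤ) t : ℝ))
      ≤ ∑ t ∈ Finset.Ioc a b, ∑ d ∈ r.divisors, (if (d : ℤ) ∣ t then min A (d : ℝ) else 0) :=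
        Finset.sum_le_sum step1
    _ = ∑ d ∈ r.divisors, ∑ t ∈ Finset.Ioc a b, (if (d : ℤ) ∣ t then min A (d : ℝ) else 0) :=
        Finset.sum_comm
    _ = ∑ d ∈ r.divisors,
          min A (d : ℝ) * ((Finset.Ioc a b).filter (fun t => (d : ℤ) ∣ t)).card := by
        refine Finset.sum_congr rfl fun d _ => ?_
        rw [← Finset.sum_filter, Finset.sum_const, nsmul_eq_mul, mul_comm]
    _ ≤ ∑ d ∈ r.divisors, (M + 2 * A) := Finset.sum_le_sum step2
    _ = (r.divisors.card : ℝ) * (M + 2 * A) := by rw [Finset.sum_const, nsmul_eq_mul]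
    _ ≤ (C₀ * (r : ℝ) ^ ε) * (M + 2 * A) := by
        apply mul_le_mul_of_nonneg_right hτ (by positivity)
    _ ≤ 2 * C₀ * (r : ℝ) ^ ε * (M + A) := by
        have hre : (0 : ℝ) ≤ (r : ℝ) ^ ε := Real.rpow_nonneg (Nat.cast_nonneg r) _
        nlinarith [mul_nonneg (mul_nonneg hC₀pos.le hre) hM]
end

section
/- Let 0 < ε ≤ 1/3 and let q be a positive integer all of whose prime factors p satisfy p ≤ q^ε. Then q has a divisor q₁ with q^(1/3) ≤ q₁ ≤ q^(1/3 + ε). -/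
open Finset

theorem smooth_number_divisor (ε : ℝ) (hε0 : 0 < ε) (hε : ε ≤ 1 / 3) (q : ℕ) (hq : 0 < q)
    (hp : ∀ p : ℕ, p.Prime → p ∣ q → (p : ℝ) ≤ (q : ℝ) ^ ε) :
    ∃ q₁ : ℕ, q₁ ∣ q ∧ (q : ℝ) ^ ((1 : ℝ) / 3) ≤ (q₁ : ℝ) ∧
      (q₁ : ℝ) ≤ (q : ℝ) ^ ((1 : ℝ) / 3 + ε) := by
  have hq1 : (1 : ℝ) ≤ q := by exact_mod_cast hq
  set T : Set ℕ := {d | d ∣ q ∧ (q : ℝ) ^ ((1 : ℝ) / 3) ≤ d} with hT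
  have hqT : q ∈ T := ⟨dvd_refl q, by
    calc (q : ℝ) ^ ((1 : ℝ) / 3) ≤ (q : ℝ) ^ (1 : ℝ) :=
          Real.rpow_le_rpow_of_exponent_le hq1 (by norm_num)
      _ = q := Real.rpow_one _⟩
  have hne : T.Nonempty := ⟨q, hqT⟩
  set q₁ := sInf T with hq₁def
  have hmem : q₁ ∈ T := Nat.sInf_mem hne
  refine ⟨q₁, hmem.1, hmem.2, ?_⟩
  by_cases h1 : q₁ = 1
  · rw [h1]
    push_cast
    exact Real.one_le_rpow hq1 (by positivity)
  · obtain ⟨p, hp', hpd⟩ := Nat.exists_prime_and_dvd h1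
    obtain ⟨m, hm⟩ := hpd
    have hmdvd : m ∣ q := (Dvd.intro_left p hm.symm).trans hmem.1
    have hq₁pos : 0 < q₁ := Nat.pos_of_dvd_of_pos hmem.1 hq
    have hmpos : 0 < m := by
      rcases Nat.eq_zero_or_pos m with h | h
      · subst h; rw [Nat.mul_zero] at hm; omega
      · exact h
    have hmlt : m < q₁ := by
      have h2 := hp'.two_le
      calc m < 2 * m := by omega
        _ ≤ p * m := Nat.mul_le_mul_right m h2
        _ = q₁ := hm.symm
    have hmnot : m ∉ T := Nat.notMem_of_lt_sInf hmlt
    have hmsmall : (m : ℝ) < (q : ℝ) ^ ((1 : ℝ) / 3) := by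
      by_contra h
      exact hmnot ⟨hmdvd, le_of_not_gt h⟩
    have hpq : (p : ℝ) ≤ (q : ℝ) ^ ε :=
      hp p hp' ((Dvd.intro m hm.symm).trans hmem.1)
    have hcast : (q₁ : ℝ) = (p : ℝ) * m := by exact_mod_cast hm
    have hεpos : (0 : ℝ) < (q : ℝ) ^ ε := by positivity
    rw [hcast, Real.rpow_add (by positivity)]
    calc (p : ℝ) * m ≤ (q : ℝ) ^ ε * m :=
          mul_le_mul_of_nonneg_right hpq (by positivity)
      _ ≤ (q : ℝ) ^ ε * (q : ℝ) ^ ((1 : ℝ) / 3) :=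
          mul_le_mul_of_nonneg_left hmsmall.le hεpos.le
      _ = (q : ℝ) ^ ((1 : ℝ) / 3) * (q : ℝ) ^ ε := mul_comm _ _
end
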